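/- Let G be a finite simple graph, s ≥ 1 an integer, and C an s-plex of G. Then C is an s-club of G; that is, any two vertices of C have distance at most s in the induced subgraph G[C]. -/
import Mathlib


/-- `C` is an `s`-club in `G`: any two vertices of `C` have distance at most `s`
in the induced subgraph `G[C]`. -/
def IsSClub {V : Type*} (G : SimpleGraph V) (s : ℕ) (C : Set V) : Prop :=
  ∀ u v : C, (G.induce C).edist u v ≤ s

/-- `C` is an `s`-plex in `G`: the induced subgraph `G[C]` is connected and every
vertex `v ∈ C` is nonadjacent to at most `s - 1` vertices of `C \ {v}`. -/
def IsSPlex {V : Type*} (G : SimpleGraph V) (s : ℕ) (C : Set V) : Prop :=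
  (G.induce C).Connected ∧
  ∀ v : C, {u : C | u ≠ v ∧ ¬ G.Adj (v : V) (u : V)}.ncard ≤ s - 1

private lemma length_drop' {V : Type*} {G : SimpleGraph V} {u v : V}
    (p : G.Walk u v) (n : ℕ) : (p.drop n).length = p.length - n := by
  induction p generalizing n with
  | nil => simp [SimpleGraph.Walk.drop]
  | cons h q ih =>
    cases n with
    | zero => simp [SimpleGraph.Walk.drop]
    | succ n => simpa [SimpleGraph.Walk.drop] using ih n

/-- distance from `getVert n` to the end is at most `length - n`. -/
private lemma dist_getVert_right {V : Type*} {G : SimpleGraph V} {u v : V}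
    (p : G.Walk u v) (n : ℕ) : G.dist (p.getVert n) v ≤ p.length - n := by
  simpa [length_drop'] using SimpleGraph.dist_le (p.drop n)

/-- distance from the start to `getVert n` is at most `n`. -/
private lemma dist_getVert_left {V : Type*} {G : SimpleGraph V} {u v : V}
    (p : G.Walk u v) {n : ℕ} (hn : n ≤ p.length) : G.dist u (p.getVert n) ≤ n := by
  have h := SimpleGraph.dist_le ((p.reverse.drop (p.length - n)).reverse)
  rw [SimpleGraph.Walk.length_reverse, length_drop',
    SimpleGraph.Walk.length_reverse] at h
  have hgv : p.reverse.getVert (p.length - n) = p.getVert n := by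
    rw [SimpleGraph.Walk.getVert_reverse, Nat.sub_sub_self hn]
  rw [hgv] at h
  calc G.dist u (p.getVert n) ≤ p.length - (p.length - n) := h
    _ ≤ n := Nat.sub_le_iff_le_add.mpr (by omega)

/-- For a shortest walk, `dist (getVert n) v = length - n`. -/
private lemma dist_getVert_eq {V : Type*} {G : SimpleGraph V} {u v : V}
    (p : G.Walk u v) (hp : p.length = G.dist u v) {n : ℕ} (hn : n ≤ p.length) :
    G.dist (p.getVert n) v = p.length - n := by
  have h1 := dist_getVert_right p n
  have hreach : G.Reachable (p.getVert n) v := ⟨p.drop n⟩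
  obtain ⟨w2, hw2⟩ := hreach.exists_walk_length_eq_dist
  have hgv : p.reverse.getVert (p.length - n) = p.getVert n := by
    rw [SimpleGraph.Walk.getVert_reverse, Nat.sub_sub_self hn]
  have h3 := SimpleGraph.dist_le
    ((((p.reverse.drop (p.length - n)).copy hgv rfl).reverse).append w2)
  rw [SimpleGraph.Walk.length_append, SimpleGraph.Walk.length_reverse,
    SimpleGraph.Walk.length_copy, length_drop', SimpleGraph.Walk.length_reverse] at h3
  omega

theorem stmt_11 {V : Type*} [Fintype V] (G : SimpleGraph V) (s : ℕ) (hs : 1 ≤ s)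
    (C : Set V) (hC : IsSPlex G s C) : IsSClub G s C := by
  classical
  obtain ⟨hconn, hdeg⟩ := hC
  intro u v
  set H := G.induce C with hH
  obtain ⟨p, hp⟩ := (hconn u v).exists_walk_length_eq_dist
  set d := p.length with hd
  by_cases hds : d ≤ s
  · calc H.edist u v ≤ (d : ℕ∞) := SimpleGraph.edist_le p
      _ ≤ (s : ℕ∞) := by exact_mod_cast hds
  · exfalso
    push_neg at hds
    have hd2 : 2 ≤ d := by omega
    -- key facts about interior/far vertices of the shortest walk
    have hne : ∀ j, 1 ≤ j → j ≤ d → p.getVert j ≠ u := by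
      intro j hj1 hjd hequ
      have := dist_getVert_eq p hp hjd
      rw [hequ, ← hp] at this
      omega
    have hnadj : ∀ j, 2 ≤ j → j ≤ d → ¬ G.Adj (u : V) (p.getVert j : V) := by
      intro j hj2 hjd hadj
      have hadj' : H.Adj u (p.getVert j) := hadj
      have h3 := SimpleGraph.dist_le (SimpleGraph.Walk.cons hadj' (p.drop j))
      rw [SimpleGraph.Walk.length_cons, length_drop'] at h3
      omega
    -- the far vertices are pairwise distinct
    have hinj : Set.InjOn (fun j => p.getVert (j + 2)) (Finset.range (d - 1)) := by
      intro i hi j hj hij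
      simp only [Finset.coe_range, Set.mem_Iio] at hi hj
      have h1 := dist_getVert_eq p hp (n := i + 2) (by omega)
      have h2 := dist_getVert_eq p hp (n := j + 2) (by omega)
      simp only at hij
      rw [hij] at h1
      omega
    -- count them inside the non-neighbour set of `u`
    have hsub : ↑((Finset.range (d - 1)).image (fun j => p.getVert (j + 2))) ⊆
        {w : C | w ≠ u ∧ ¬ G.Adj (u : V) (w : V)} := by
      intro w hw
      simp only [Finset.coe_image, Finset.coe_range, Set.mem_image, Set.mem_Iio] at hw
      obtain ⟨j, hj, rfl⟩ := hw
      exact ⟨hne (j + 2) (by omega) (by omega), hnadj (j + 2) (by omega) (by omega)⟩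
    have hcard : ((Finset.range (d - 1)).image (fun j => p.getVert (j + 2))).card
        = d - 1 := by
      rw [Finset.card_image_of_injOn hinj, Finset.card_range]
    have hle : d - 1 ≤ s - 1 := by
      have := Set.ncard_le_ncard hsub (Set.toFinite _)
      rw [Set.ncard_coe_finset, hcard] at this
      exact this.trans (hdeg u)
    omega
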